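/- Let G : ℝ^p × ℝ^q → ℝ^q be continuous on the compact set Λ_x × Λ_y and satisfy (A1) and (A2). Let x̃ : ℝ → Λ_x, ỹ : ℝ → Λ_y be continuous, with x̃ uniformly continuous and ỹ Lipschitz with constant M_G = sup_{Λ_x × Λ_y} ‖G‖. Then for every ε₀ > 0, there exists r₀ > 0 (independent of n) such that whenever ‖x̃(t+μ) − x̃(t)‖ ≥ ε₀ for all t in an interval [ω − r, ω + r] with r ≥ r₀, one has max over t ∈ [ω−r₀, ω+r₀] of ‖ỹ(t+μ) − ỹ(t)‖ ≥ L₁ r₀ ε₀ / (2√q (r₀ L₂ + 1)), where ỹ satisfies ỹ'(t) = G(x̃(t), ỹ(t)) for all t. -/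

import Mathlib

open Set

private lemma euclid_abs_coord_le {q : ℕ} (v : EuclideanSpace ℝ (Fin q)) (i : Fin q) :
    |v i| ≤ ‖v‖ := by
  rw [EuclideanSpace.norm_eq]
  have h1 : |v i| = Real.sqrt (‖v i‖ ^ 2) := by
    rw [Real.sqrt_sq (norm_nonneg _), Real.norm_eq_abs]
  rw [h1]
  exact Real.sqrt_le_sqrt
    (Finset.single_le_sum (fun j _ => sq_nonneg ‖v j‖) (Finset.mem_univ i))

private lemma euclid_exists_coord {q : ℕ} (hq : 0 < q) (v : EuclideanSpace ℝ (Fin q)) :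
    ∃ i, ‖v‖ ≤ Real.sqrt q * |v i| := by
  obtain ⟨i, -, hi⟩ := Finset.exists_max_image Finset.univ (fun j => |v j|)
    ⟨⟨0, hq⟩, Finset.mem_univ _⟩
  refine ⟨i, ?_⟩
  rw [EuclideanSpace.norm_eq]
  have h2 : Real.sqrt q * |v i| = Real.sqrt (q * |v i| ^ 2) := by
    rw [Real.sqrt_mul (by positivity), Real.sqrt_sq (abs_nonneg _)]
  rw [h2]
  apply Real.sqrt_le_sqrt
  calc ∑ j, ‖v j‖ ^ 2 ≤ ∑ _j : Fin q, |v i| ^ 2 := by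
        refine Finset.sum_le_sum fun j _ => ?_
        rw [Real.norm_eq_abs]
        exact pow_le_pow_left₀ (abs_nonneg _) (hi j (Finset.mem_univ _)) 2
    _ = q * |v i| ^ 2 := by
        simp [Finset.sum_const, nsmul_eq_mul]

set_option maxHeartbeats 1000000 in
theorem key_quantitative_lower_bound (p q : ℕ)
    (G : EuclideanSpace ℝ (Fin p) × EuclideanSpace ℝ (Fin q) → EuclideanSpace ℝ (Fin q))
    (Λx : Set (EuclideanSpace ℝ (Fin p))) (Λy : Set (EuclideanSpace ℝ (Fin q)))
    (hΛx : IsCompact Λx) (hΛy : IsCompact Λy)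
    (hGcont : ContinuousOn G (Λx ×ˢ Λy))
    (L₁ L₂ : ℝ) (hL₁ : 0 < L₁) (hL₂ : 0 < L₂)
    (hA1 : ∀ x₁ ∈ Λx, ∀ x₂ ∈ Λx, ∀ y ∈ Λy,
      L₁ * ‖x₁ - x₂‖ ≤ ‖G (x₁, y) - G (x₂, y)‖)
    (hA2 : ∀ x ∈ Λx, ∀ y₁ ∈ Λy, ∀ y₂ ∈ Λy,
      ‖G (x, y₁) - G (x, y₂)‖ ≤ L₂ * ‖y₁ - y₂‖)
    (M_G : ℝ) (hMG : 0 < M_G)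
    (hGbd : ∀ x ∈ Λx, ∀ y ∈ Λy, ‖G (x, y)‖ ≤ M_G)
    (xtil : ℝ → EuclideanSpace ℝ (Fin p)) (ytil : ℝ → EuclideanSpace ℝ (Fin q))
    (hxmem : ∀ t, xtil t ∈ Λx) (hymem : ∀ t, ytil t ∈ Λy)
    (hxuc : UniformContinuous xtil)
    (hylip : LipschitzWith M_G.toNNReal ytil)
    (hysol : ∀ t, HasDerivAt ytil (G (xtil t, ytil t)) t) :
    ∀ ε₀ > (0 : ℝ), ∃ r₀ > (0 : ℝ), ∀ μ ≥ (0 : ℝ), ∀ ω r : ℝ, r₀ ≤ r →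
      (∀ t ∈ Icc (ω - r) (ω + r), ε₀ ≤ ‖xtil (t + μ) - xtil t‖) →
      ∃ t ∈ Icc (ω - r₀) (ω + r₀),
        L₁ * r₀ * ε₀ / (2 * Real.sqrt q * (r₀ * L₂ + 1)) ≤ ‖ytil (t + μ) - ytil t‖ := by
  intro ε₀ hε₀
  rcases Nat.eq_zero_or_pos q with hq | hq
  · -- trivial case q = 0 : the bound is 0/0 = 0
    subst hq
    refine ⟨1, one_pos, fun μ hμ ω r hr hx => ⟨ω, ⟨by linarith, by linarith⟩, ?_⟩⟩
    simp
  · -- main case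
    have hq1 : (1 : ℝ) ≤ Real.sqrt q := Real.one_le_sqrt.mpr (by exact_mod_cast hq)
    have hs0 : (0 : ℝ) < Real.sqrt q := lt_of_lt_of_le one_pos hq1
    set s := Real.sqrt q with hsdef
    -- uniform continuity of G on the compact product
    have hGuc : UniformContinuousOn G (Λx ×ˢ Λy) :=
      (hΛx.prod hΛy).uniformContinuousOn_of_continuous hGcont
    have hηpos : (0 : ℝ) < L₁ * ε₀ / (2 * s) / 2 := by positivity
    obtain ⟨δG, hδG, hG⟩ := Metric.uniformContinuousOn_iff.mp hGuc _ hηpos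
    have hφ : UniformContinuous fun t : ℝ => (xtil t, ytil t) :=
      hxuc.prodMk hylip.uniformContinuous
    obtain ⟨δ, hδ, hφδ⟩ := Metric.uniformContinuous_iff.mp hφ δG hδG
    set η := L₁ * ε₀ / (2 * s) with hηdef
    refine ⟨δ / 2, by positivity, ?_⟩
    intro μ hμ ω r hr hx
    set r₀ := δ / 2 with hr₀def
    have hr₀ : 0 < r₀ := by positivity
    set c := L₁ * r₀ * ε₀ / (2 * s * (r₀ * L₂ + 1)) with hcdef
    have hc : 0 < c := by
      rw [hcdef]; positivity
    by_contra hcon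
    push_neg at hcon
    set h : ℝ → EuclideanSpace ℝ (Fin q) := fun t => ytil (t + μ) - ytil t with hhdef
    set h' : ℝ → EuclideanSpace ℝ (Fin q) :=
      fun t => G (xtil (t + μ), ytil (t + μ)) - G (xtil t, ytil t) with hh'def
    have hder : ∀ t, HasDerivAt h (h' t) t := by
      intro t
      simp only [hhdef, hh'def]
      have h1 : HasDerivAt (fun u : ℝ => ytil (u + μ)) (G (xtil (t + μ), ytil (t + μ))) t := by
        have := (hysol (t + μ)).scomp t ((hasDerivAt_id t).add_const μ)
        rw [one_smul] at this
        exact this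
      exact h1.sub (hysol t)
    -- variation of h' near ω
    have hvar : ∀ t ∈ Icc (ω - r₀) (ω + r₀), ‖h' t - h' ω‖ ≤ η := by
      intro t ht
      have hd : dist t ω < δ := by
        rw [Real.dist_eq, abs_lt]
        exact ⟨by linarith [ht.1], by linarith [ht.2]⟩
      have hd2 : dist (t + μ) (ω + μ) < δ := by
        rw [Real.dist_eq]
        rw [Real.dist_eq] at hd
        simpa using hd
      have e1 : dist (G (xtil (t + μ), ytil (t + μ))) (G (xtil (ω + μ), ytil (ω + μ))) < η / 2 :=
        hG _ (Set.mk_mem_prod (hxmem _) (hymem _)) _ (Set.mk_mem_prod (hxmem _) (hymem _))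
          (hφδ hd2)
      have e2 : dist (G (xtil t, ytil t)) (G (xtil ω, ytil ω)) < η / 2 :=
        hG _ (Set.mk_mem_prod (hxmem _) (hymem _)) _ (Set.mk_mem_prod (hxmem _) (hymem _))
          (hφδ hd)
      have heq : h' t - h' ω =
          (G (xtil (t + μ), ytil (t + μ)) - G (xtil (ω + μ), ytil (ω + μ)))
            - (G (xtil t, ytil t) - G (xtil ω, ytil ω)) := by
        simp only [hh'def]; abel
      rw [heq]
      calc ‖_ - _‖ ≤ ‖(G (xtil (t + μ), ytil (t + μ)) - G (xtil (ω + μ), ytil (ω + μ)))‖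
            + ‖(G (xtil t, ytil t) - G (xtil ω, ytil ω))‖ := norm_sub_le _ _
        _ ≤ η / 2 + η / 2 := by
            rw [← dist_eq_norm, ← dist_eq_norm]
            exact add_le_add e1.le e2.le
        _ = η := by ring
    -- lower bound for ‖h' ω‖
    have hxε : ε₀ ≤ ‖xtil (ω + μ) - xtil ω‖ := hx ω ⟨by linarith, by linarith⟩
    have hkey : L₁ * ε₀ - L₂ * ‖h ω‖ ≤ ‖h' ω‖ := by
      have t1 : L₁ * ε₀ ≤ L₁ * ‖xtil (ω + μ) - xtil ω‖ :=
        mul_le_mul_of_nonneg_left hxε hL₁.le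
      have t2 := hA1 (xtil (ω + μ)) (hxmem _) (xtil ω) (hxmem _) (ytil ω) (hymem _)
      have t5 := hA2 (xtil (ω + μ)) (hxmem _) (ytil ω) (hymem _) (ytil (ω + μ)) (hymem _)
      have t5' : ‖G (xtil (ω + μ), ytil ω) - G (xtil (ω + μ), ytil (ω + μ))‖ ≤ L₂ * ‖h ω‖ := by
        rw [norm_sub_rev (ytil ω)] at t5
        simpa [hhdef] using t5
      have t4 : ‖G (xtil (ω + μ), ytil ω) - G (xtil ω, ytil ω)‖ ≤
          ‖G (xtil (ω + μ), ytil ω) - G (xtil (ω + μ), ytil (ω + μ))‖ + ‖h' ω‖ := by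
        have heq : G (xtil (ω + μ), ytil ω) - G (xtil ω, ytil ω)
            = (G (xtil (ω + μ), ytil ω) - G (xtil (ω + μ), ytil (ω + μ))) + h' ω := by
          simp only [hh'def]; abel
        rw [heq]
        exact norm_add_le _ _
      linarith [t1.trans t2]
    have hhωc : ‖h ω‖ < c := hcon ω ⟨by linarith, by linarith⟩
    obtain ⟨i, hi⟩ := euclid_exists_coord hq (h' ω)
    rw [← hsdef] at hi
    -- componentwise derivative
    have hderi : ∀ t, HasDerivAt (fun u => h u i) (h' t i) t := by
      intro t
      have := ((EuclideanSpace.proj (𝕜 := ℝ) i)).hasFDerivAt.comp_hasDerivAt t (hder t)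
      exact this
    -- mean value theorem on [ω - r₀, ω + r₀]
    have hab : ω - r₀ < ω + r₀ := by linarith
    obtain ⟨ξ, hξ, hslope⟩ := exists_hasDerivAt_eq_slope (fun u => h u i) (fun u => h' u i)
      hab (fun t _ => (hderi t).continuousAt.continuousWithinAt) (fun t _ => hderi t)
    have hξI : ξ ∈ Icc (ω - r₀) (ω + r₀) := ⟨hξ.1.le, hξ.2.le⟩
    have habs : |h' ξ i - h' ω i| ≤ η := by
      refine le_trans ?_ (hvar ξ hξI)
      have := euclid_abs_coord_le (h' ξ - h' ω) i
      simpa using this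
    -- step 1 : lower bound on s * |h' ω i|
    have step1 : L₁ * ε₀ - L₂ * c ≤ s * |h' ω i| := by
      have := mul_le_mul_of_nonneg_left hhωc.le hL₂.le
      linarith [hkey.trans hi]
    -- step 2 : lower bound on s * |h' ξ i|
    have hsη : s * η = L₁ * ε₀ / 2 := by
      rw [hηdef]
      field_simp
    have F5 : |h' ω i| - η ≤ |h' ξ i| := by
      have := abs_sub_abs_le_abs_sub (h' ω i) (h' ξ i)
      rw [abs_sub_comm] at this
      linarith
    have step2 : L₁ * ε₀ / 2 - L₂ * c ≤ s * |h' ξ i| := by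
      have := mul_le_mul_of_nonneg_left F5 hs0.le
      nlinarith [step1, hsη]
    -- bound from the contradiction hypothesis
    have hFa : ‖h (ω - r₀)‖ < c := hcon _ ⟨le_refl _, by linarith⟩
    have hFb : ‖h (ω + r₀)‖ < c := hcon _ ⟨by linarith, le_refl _⟩
    have hslope' : h (ω + r₀) i - h (ω - r₀) i = (2 * r₀) * h' ξ i := by
      have hne : ω + r₀ - (ω - r₀) ≠ 0 := by linarith
      have := (div_eq_iff hne).mp hslope.symm
      rw [this]; ring
    have F1 : 2 * r₀ * |h' ξ i| < 2 * c := by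
      have h1 : |h (ω + r₀) i - h (ω - r₀) i| ≤ |h (ω + r₀) i| + |h (ω - r₀) i| :=
        abs_sub _ _
      have h2 : |h (ω + r₀) i| ≤ ‖h (ω + r₀)‖ := euclid_abs_coord_le _ i
      have h3 : |h (ω - r₀) i| ≤ ‖h (ω - r₀)‖ := euclid_abs_coord_le _ i
      have h4 : |h (ω + r₀) i - h (ω - r₀) i| = 2 * r₀ * |h' ξ i| := by
        rw [hslope', abs_mul, abs_of_pos (by linarith : (0:ℝ) < 2 * r₀)]
      linarith
    -- final contradiction
    have step3 : s * (2 * r₀ * |h' ξ i|) < s * (2 * c) := mul_lt_mul_of_pos_left F1 hs0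
    have step4 : 2 * r₀ * (L₁ * ε₀ / 2 - L₂ * c) ≤ 2 * r₀ * (s * |h' ξ i|) :=
      mul_le_mul_of_nonneg_left step2 (by positivity)
    have hne2 : (2 * s * (r₀ * L₂ + 1)) ≠ 0 := by positivity
    have hceq : c * (2 * s * (r₀ * L₂ + 1)) = L₁ * r₀ * ε₀ := by
      rw [hcdef]
      field_simp
    have hpos : 0 ≤ r₀ * L₂ * c * (s - 1) :=
      mul_nonneg (by positivity) (by linarith)
    nlinarith [step3, step4, hceq, hpos, hc, hr₀]
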